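/- Amalgamation closure: the set of provable grounds of a fixed formula α in the full calculus G is closed under union, and equals the closure under binary union of the set of grounding bars for α. -/

import Mathlib

inductive Formula : Type
  | atom : ℕ → Formula
  | bot : Formula
  | and : Formula → Formula → Formula
  | or : Formula → Formula → Formula
  | neg : Formula → Formula
  deriving DecidableEq

namespace Formula

/-- The grounding calculus `G`, parameterised by whether the `∗` rules for
disjunction (and negated conjunction) are present (`star`) and whether the
Amalgamation rule is present (`am`).  Grounds are finite sets of formulas,
so set contraction is implicit. -/
inductive Proves (star am : Bool) : Finset Formula → Formula → Prop
  -- 0-premiss rules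
  | andI0 (α β : Formula) : Proves star am {α, β} (α.and β)
  | orI0l (α β : Formula) : Proves star am {α} (α.or β)
  | orI0r (α β : Formula) : Proves star am {β} (α.or β)
  | orI0both (α β : Formula) (h : star = true) : Proves star am {α, β} (α.or β)
  | nandI0l (α β : Formula) : Proves star am {α.neg} (α.and β).neg
  | nandI0r (α β : Formula) : Proves star am {β.neg} (α.and β).neg
  | nandI0both (α β : Formula) (h : star = true) : Proves star am {α.neg, β.neg} (α.and β).neg
  | norI0 (α β : Formula) : Proves star am {α.neg, β.neg} (α.or β).neg
  | nnI0 (α : Formula) : Proves star am {α} α.neg.neg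
  -- introduction rules
  | andI {Γ Δ : Finset Formula} {α β : Formula} : Proves star am Γ α → Proves star am Δ β →
      Proves star am (Γ ∪ Δ) (α.and β)
  | orIl {Γ : Finset Formula} {α β : Formula} : Proves star am Γ α → Proves star am Γ (α.or β)
  | orIr {Γ : Finset Formula} {α β : Formula} : Proves star am Γ β → Proves star am Γ (α.or β)
  | orIboth {Γ Δ : Finset Formula} {α β : Formula} (h : star = true) : Proves star am Γ α → Proves star am Δ β →
      Proves star am (Γ ∪ Δ) (α.or β)
  | nandIl {Γ : Finset Formula} {α β : Formula} : Proves star am Γ α.neg → Proves star am Γ (α.and β).neg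
  | nandIr {Γ : Finset Formula} {α β : Formula} : Proves star am Γ β.neg → Proves star am Γ (α.and β).neg
  | nandIboth {Γ Δ : Finset Formula} {α β : Formula} (h : star = true) : Proves star am Γ α.neg → Proves star am Δ β.neg →
      Proves star am (Γ ∪ Δ) (α.and β).neg
  | norI {Γ Δ : Finset Formula} {α β : Formula} : Proves star am Γ α.neg → Proves star am Δ β.neg →
      Proves star am (Γ ∪ Δ) (α.or β).neg
  | nnI {Γ : Finset Formula} {α : Formula} : Proves star am Γ α → Proves star am Γ α.neg.neg
  -- elimination rules (replacing a member of the ground)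
  | andE {Γ : Finset Formula} {β γ δ : Formula} (h : (β.and γ) ∈ Γ) : Proves star am Γ δ →
      Proves star am (Γ.erase (β.and γ) ∪ {β, γ}) δ
  | orEl {Γ : Finset Formula} {β γ δ : Formula} (h : (β.or γ) ∈ Γ) : Proves star am Γ δ →
      Proves star am (Γ.erase (β.or γ) ∪ {β}) δ
  | orEr {Γ : Finset Formula} {β γ δ : Formula} (h : (β.or γ) ∈ Γ) : Proves star am Γ δ →
      Proves star am (Γ.erase (β.or γ) ∪ {γ}) δ
  | orEboth {Γ : Finset Formula} {β γ δ : Formula} (hs : star = true) (h : (β.or γ) ∈ Γ) : Proves star am Γ δ →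
      Proves star am (Γ.erase (β.or γ) ∪ {β, γ}) δ
  | nandEl {Γ : Finset Formula} {β γ δ : Formula} (h : (β.and γ).neg ∈ Γ) : Proves star am Γ δ →
      Proves star am (Γ.erase (β.and γ).neg ∪ {β.neg}) δ
  | nandEr {Γ : Finset Formula} {β γ δ : Formula} (h : (β.and γ).neg ∈ Γ) : Proves star am Γ δ →
      Proves star am (Γ.erase (β.and γ).neg ∪ {γ.neg}) δ
  | nandEboth {Γ : Finset Formula} {β γ δ : Formula} (hs : star = true) (h : (β.and γ).neg ∈ Γ) : Proves star am Γ δ →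
      Proves star am (Γ.erase (β.and γ).neg ∪ {β.neg, γ.neg}) δ
  | norE {Γ : Finset Formula} {β γ δ : Formula} (h : (β.or γ).neg ∈ Γ) : Proves star am Γ δ →
      Proves star am (Γ.erase (β.or γ).neg ∪ {β.neg, γ.neg}) δ
  | nnE {Γ : Finset Formula} {β δ : Formula} (h : β.neg.neg ∈ Γ) : Proves star am Γ δ →
      Proves star am (Γ.erase β.neg.neg ∪ {β}) δ
  -- Amalgamation
  | am {Γ Δ : Finset Formula} {α : Formula} (h : am = true) : Proves star am Γ α → Proves star am Δ α →
      Proves star am (Γ ∪ Δ) α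

/-- The formula at a node, with `~` prefixed when the node is negative. -/
def sgn (pos : Bool) (α : Formula) : Formula := if pos then α else α.neg

/-- `BarRel star pos α B`: `B` is (the set of signed formulas of) a bar of some
selection tree of the syntactic tree of `α`, where `α`'s root lies at polarity
`pos` (positive/negative according to the parity of `~`-nodes above it).
The trivial bar `{sgn pos α}` (containing the root) is included; feeble nodes
(positive `∨`-nodes, negative `∧`-nodes) have exactly one child kept, or
possibly both when the `∗` rules are present (`star = true`). -/
inductive BarRel (star : Bool) : Bool → Formula → Finset Formula → Prop
  | triv (pos : Bool) (α : Formula) : BarRel star pos α {sgn pos α}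
  | and_pos {β γ : Formula} {B₁ B₂ : Finset Formula} : BarRel star true β B₁ → BarRel star true γ B₂ →
      BarRel star true (β.and γ) (B₁ ∪ B₂)
  | and_neg_l {β γ : Formula} {B : Finset Formula} : BarRel star false β B → BarRel star false (β.and γ) B
  | and_neg_r {β γ : Formula} {B : Finset Formula} : BarRel star false γ B → BarRel star false (β.and γ) B
  | and_neg_both {β γ : Formula} {B₁ B₂ : Finset Formula} (h : star = true) :
      BarRel star false β B₁ → BarRel star false γ B₂ →
      BarRel star false (β.and γ) (B₁ ∪ B₂)
  | or_pos_l {β γ : Formula} {B : Finset Formula} : BarRel star true β B → BarRel star true (β.or γ) B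
  | or_pos_r {β γ : Formula} {B : Finset Formula} : BarRel star true γ B → BarRel star true (β.or γ) B
  | or_pos_both {β γ : Formula} {B₁ B₂ : Finset Formula} (h : star = true) :
      BarRel star true β B₁ → BarRel star true γ B₂ →
      BarRel star true (β.or γ) (B₁ ∪ B₂)
  | or_neg {β γ : Formula} {B₁ B₂ : Finset Formula} : BarRel star false β B₁ → BarRel star false γ B₂ →
      BarRel star false (β.or γ) (B₁ ∪ B₂)
  | neg (pos) {β : Formula} {B : Finset Formula} : BarRel star (!pos) β B → BarRel star pos β.neg B

/-- A grounding bar for `α`: a bar of a selection tree of `α` (with `~`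
prefixed at negative nodes) which is non-trivial, i.e. neither contains the
root nor the (signed) only child of the root, which amounts to the bar not
being the singleton of `α` itself. -/
def GroundingBar (star : Bool) (α : Formula) (B : Finset Formula) : Prop :=
  BarRel star true α B ∧ B ≠ {α}

/-- Subformula relation. -/
inductive Sub : Formula → Formula → Prop
  | refl (α : Formula) : Sub α α
  | and_l {α β γ : Formula} : Sub α β → Sub α (β.and γ)
  | and_r {α β γ : Formula} : Sub α γ → Sub α (β.and γ)
  | or_l {α β γ : Formula} : Sub α β → Sub α (β.or γ)
  | or_r {α β γ : Formula} : Sub α γ → Sub α (β.or γ)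
  | neg {α β : Formula} : Sub α β → Sub α β.neg

/-- Proper subformula. -/
def ProperSub (α β : Formula) : Prop := Sub α β ∧ α ≠ β

end Formula

open Formula

/-- Closure of a family of finite sets under binary union. -/
inductive UnionClosure (S : Set (Finset Formula)) : Finset Formula → Prop
  | base {Γ} : Γ ∈ S → UnionClosure S Γ
  | union {Γ Δ} : UnionClosure S Γ → UnionClosure S Δ → UnionClosure S (Γ ∪ Δ)

section Aux
open Formula

abbrev Pr (Γ : Finset Formula) (δ : Formula) : Prop := Proves false true Γ δ

@[simp] lemma sgn_true (α : Formula) : sgn true α = α := rfl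
@[simp] lemma sgn_false (α : Formula) : sgn false α = α.neg := rfl

def fsize : Formula → ℕ
  | .atom _ => 1
  | .bot => 1
  | .and a b => fsize a + fsize b + 1
  | .or a b => fsize a + fsize b + 1
  | .neg a => fsize a + 1

lemma fsize_pos (φ : Formula) : 0 < fsize φ := by
  cases φ <;> simp [fsize]

lemma bar_size {pos : Bool} {γ : Formula} {B : Finset Formula}
    (h : BarRel false pos γ B) : ∀ x ∈ B, fsize x ≤ fsize γ + (cond pos 0 1) := by
  induction h with
  | triv q φ => intro x hx; simp at hx; subst hx; cases q <;> simp [fsize]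
  | and_pos h1 h2 IH1 IH2 =>
    intro x hx; simp at hx
    rcases hx with hx | hx
    · have := IH1 x hx; simp [fsize] at this ⊢; omega
    · have := IH2 x hx; simp [fsize] at this ⊢; omega
  | and_neg_l h1 IH1 =>
    intro x hx; have := IH1 x hx; simp [fsize] at this ⊢; omega
  | and_neg_r h1 IH1 =>
    intro x hx; have := IH1 x hx; simp [fsize] at this ⊢; omega
  | and_neg_both h => simp at h
  | or_pos_l h1 IH1 =>
    intro x hx; have := IH1 x hx; simp [fsize] at this ⊢; omega
  | or_pos_r h1 IH1 =>
    intro x hx; have := IH1 x hx; simp [fsize] at this ⊢; omega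
  | or_pos_both h => simp at h
  | or_neg h1 h2 IH1 IH2 =>
    intro x hx; simp at hx
    rcases hx with hx | hx
    · have := IH1 x hx; simp [fsize] at this ⊢; omega
    · have := IH2 x hx; simp [fsize] at this ⊢; omega
  | neg pos h1 IH1 =>
    intro x hx; have := IH1 x hx; cases pos <;> simp [fsize] at this ⊢ <;> omega

lemma ne_singleton {B : Finset Formula} {g : Formula}
    (hs : ∀ x ∈ B, fsize x < fsize g) : B ≠ {g} :=
  fun h => lt_irrefl _ (hs g (h ▸ Finset.mem_singleton_self g))

end Aux
set_option maxHeartbeats 1000000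

section Steps
open Formula

lemma sandwich {Γ Δ B : Finset Formula} {δ : Formula} (g : Formula)
    (hg : g ∈ Γ) (hΓ : Pr Γ δ) (hE : Pr (Γ.erase g ∪ B) δ)
    (h₁ : Γ.erase g ⊆ Δ) (h₂ : Δ ⊆ Γ) : Pr (Δ ∪ B) δ := by
  by_cases hgΔ : g ∈ Δ
  · have hΔ : Δ = Γ := by
      refine subset_antisymm h₂ ?_
      intro x hx
      by_cases hxg : x = g
      · subst hxg; exact hgΔ
      · exact h₁ (Finset.mem_erase.2 ⟨hxg, hx⟩)
    subst hΔ
    have h := Proves.am rfl hΓ hE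
    have heq : Δ ∪ (Δ.erase g ∪ B) = Δ ∪ B := by
      ext x; simp [Finset.mem_erase]; tauto
    rwa [heq] at h
  · have hΔ : Δ = Γ.erase g := by
      refine subset_antisymm ?_ h₁
      intro x hx
      exact Finset.mem_erase.2 ⟨fun h => hgΔ (by rwa [h] at hx), h₂ hx⟩
    rw [hΔ]; exact hE

lemma singlestep {E B : Finset Formula} {a δ : Formula}
    (IH : ∀ {Γ Δ : Finset Formula}, Pr Γ δ → a ∈ Γ → Γ.erase a ⊆ Δ → Δ ⊆ Γ → Pr (Δ ∪ B) δ)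
    (h0 : Pr (E ∪ {a}) δ) : Pr (E ∪ B) δ := by
  have ha : a ∈ E ∪ {a} := by simp
  by_cases c : a ∈ E ∪ B
  · have h1 := IH h0 ha (Finset.erase_subset _ _) subset_rfl
    have heq : E ∪ {a} ∪ B = E ∪ B := by
      simp only [Finset.mem_union] at c
      ext x; simp
      by_cases hx : x = a
      · subst hx; tauto
      · tauto
    rwa [heq] at h1
  · have h1 := IH h0 ha subset_rfl (Finset.erase_subset _ _)
    have heq : (E ∪ {a}).erase a ∪ B = E ∪ B := by
      simp only [Finset.mem_union] at c; push_neg at c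
      ext x; simp [Finset.mem_erase]
      by_cases hx : x = a
      · subst hx; tauto
      · tauto
    rwa [heq] at h1

lemma pairstep {E B₁ B₂ : Finset Formula} {a b δ : Formula}
    (IH₁ : ∀ {Γ Δ : Finset Formula}, Pr Γ δ → a ∈ Γ → Γ.erase a ⊆ Δ → Δ ⊆ Γ → Pr (Δ ∪ B₁) δ)
    (IH₂ : ∀ {Γ Δ : Finset Formula}, Pr Γ δ → b ∈ Γ → Γ.erase b ⊆ Δ → Δ ⊆ Γ → Pr (Δ ∪ B₂) δ)
    (h0 : Pr (E ∪ {a, b}) δ) : Pr (E ∪ (B₁ ∪ B₂)) δ := by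
  have ha : a ∈ E ∪ {a, b} := by simp
  by_cases c₁ : a ∈ E ∨ a ∈ B₂ ∨ a = b
  · have h1 := IH₁ h0 ha (Finset.erase_subset _ _) subset_rfl
    have hb : b ∈ E ∪ {a, b} ∪ B₁ := by simp
    by_cases c₂ : b ∈ E ∨ b ∈ B₁ ∨ b ∈ B₂
    · have h2 := IH₂ h1 hb (Finset.erase_subset _ _) subset_rfl
      have heq : E ∪ {a, b} ∪ B₁ ∪ B₂ = E ∪ (B₁ ∪ B₂) := by
        ext x; simp
        by_cases hxa : x = a <;> by_cases hxb : x = b <;> subst_vars <;> tauto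
      rwa [heq] at h2
    · push_neg at c₂
      have h2 := IH₂ h1 hb subset_rfl (Finset.erase_subset _ _)
      have heq : (E ∪ {a, b} ∪ B₁).erase b ∪ B₂ = E ∪ (B₁ ∪ B₂) := by
        obtain ⟨cb1, cb2, cb3⟩ := c₂
        ext x; simp [Finset.mem_erase]
        by_cases hxa : x = a <;> by_cases hxb : x = b <;> subst_vars <;> tauto
      rwa [heq] at h2
  · push_neg at c₁
    obtain ⟨ca1, ca2, ca3⟩ := c₁
    have h1 := IH₁ h0 ha subset_rfl (Finset.erase_subset _ _)
    have hb : b ∈ (E ∪ {a, b}).erase a ∪ B₁ := by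
      exact Finset.mem_union_left _ (Finset.mem_erase.2 ⟨fun h => ca3 h.symm, by simp⟩)
    by_cases c₂ : b ∈ E ∨ b ∈ B₁ ∨ b ∈ B₂
    · have h2 := IH₂ h1 hb (Finset.erase_subset _ _) subset_rfl
      have heq : (E ∪ {a, b}).erase a ∪ B₁ ∪ B₂ = E ∪ (B₁ ∪ B₂) := by
        ext x; simp [Finset.mem_erase]
        by_cases hxa : x = a <;> by_cases hxb : x = b <;> subst_vars <;> tauto
      rwa [heq] at h2
    · push_neg at c₂
      obtain ⟨cb1, cb2, cb3⟩ := c₂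
      have h2 := IH₂ h1 hb subset_rfl (Finset.erase_subset _ _)
      have heq : ((E ∪ {a, b}).erase a ∪ B₁).erase b ∪ B₂ = E ∪ (B₁ ∪ B₂) := by
        ext x; simp [Finset.mem_erase]
        by_cases hxa : x = a <;> by_cases hxb : x = b <;> subst_vars <;> tauto
      rwa [heq] at h2

end Steps
section BarL
open Formula

lemma barL {pos : Bool} {γ : Formula} {B : Finset Formula} (h : BarRel false pos γ B) :
    ∀ {δ : Formula} {Γ Δ : Finset Formula}, Pr Γ δ → sgn pos γ ∈ Γ →
      Γ.erase (sgn pos γ) ⊆ Δ → Δ ⊆ Γ → Pr (Δ ∪ B) δ := by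
  induction h with
  | triv q φ =>
    intro δ Γ Δ hΓ hg h₁ h₂
    have heq : Δ ∪ {sgn q φ} = Γ := by
      ext x; simp only [Finset.mem_union, Finset.mem_singleton]
      constructor
      · rintro (hx | rfl)
        · exact h₂ hx
        · exact hg
      · intro hx
        by_cases hxg : x = sgn q φ
        · exact Or.inr hxg
        · exact Or.inl (h₁ (Finset.mem_erase.2 ⟨hxg, hx⟩))
    rw [heq]; exact hΓ
  | @and_pos β γ₂ B₁ B₂ hβ hγ IH₁ IH₂ =>
    intro δ Γ Δ hΓ hg h₁ h₂
    simp only [sgn_true] at hg h₁ ⊢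
    refine sandwich _ hg hΓ ?_ h₁ h₂
    exact pairstep (fun hP hm hs1 hs2 => IH₁ hP hm hs1 hs2)
      (fun hP hm hs1 hs2 => IH₂ hP hm hs1 hs2) (Proves.andE hg hΓ)
  | @and_neg_l β γ₂ B hβ IH =>
    intro δ Γ Δ hΓ hg h₁ h₂
    simp only [sgn_false] at hg h₁ ⊢
    refine sandwich _ hg hΓ ?_ h₁ h₂
    exact singlestep (fun hP hm hs1 hs2 => IH hP hm hs1 hs2) (Proves.nandEl hg hΓ)
  | @and_neg_r β γ₂ B hβ IH =>
    intro δ Γ Δ hΓ hg h₁ h₂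
    simp only [sgn_false] at hg h₁ ⊢
    refine sandwich _ hg hΓ ?_ h₁ h₂
    exact singlestep (fun hP hm hs1 hs2 => IH hP hm hs1 hs2) (Proves.nandEr hg hΓ)
  | and_neg_both h => simp at h
  | @or_pos_l β γ₂ B hβ IH =>
    intro δ Γ Δ hΓ hg h₁ h₂
    simp only [sgn_true] at hg h₁ ⊢
    refine sandwich _ hg hΓ ?_ h₁ h₂
    exact singlestep (fun hP hm hs1 hs2 => IH hP hm hs1 hs2) (Proves.orEl hg hΓ)
  | @or_pos_r β γ₂ B hβ IH =>
    intro δ Γ Δ hΓ hg h₁ h₂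
    simp only [sgn_true] at hg h₁ ⊢
    refine sandwich _ hg hΓ ?_ h₁ h₂
    exact singlestep (fun hP hm hs1 hs2 => IH hP hm hs1 hs2) (Proves.orEr hg hΓ)
  | or_pos_both h => simp at h
  | @or_neg β γ₂ B₁ B₂ hβ hγ IH₁ IH₂ =>
    intro δ Γ Δ hΓ hg h₁ h₂
    simp only [sgn_false] at hg h₁ ⊢
    refine sandwich _ hg hΓ ?_ h₁ h₂
    exact pairstep (fun hP hm hs1 hs2 => IH₁ hP hm hs1 hs2)
      (fun hP hm hs1 hs2 => IH₂ hP hm hs1 hs2) (Proves.norE hg hΓ)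
  | @neg pos β B hβ IH =>
    cases pos with
    | true =>
      intro δ Γ Δ hΓ hg h₁ h₂
      exact IH hΓ hg h₁ h₂
    | false =>
      intro δ Γ Δ hΓ hg h₁ h₂
      simp only [sgn_false] at hg h₁ ⊢
      refine sandwich _ hg hΓ ?_ h₁ h₂
      exact singlestep (fun hP hm hs1 hs2 => IH hP hm hs1 hs2) (Proves.nnE hg hΓ)

lemma barM {pos : Bool} {γ : Formula} {B : Finset Formula} (h : BarRel false pos γ B) :
    B ≠ {sgn pos γ} → Pr B (sgn pos γ) := by
  induction h with
  | triv q φ => intro hne; exact absurd rfl hne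
  | @and_pos β γ₂ B₁ B₂ hβ hγ IH₁ IH₂ =>
    intro _
    have h0 : Pr (∅ ∪ {β, γ₂}) (β.and γ₂) := by
      simpa using Proves.andI0 β γ₂
    simpa using pairstep (fun hP hm hs1 hs2 => barL hβ hP hm hs1 hs2)
      (fun hP hm hs1 hs2 => barL hγ hP hm hs1 hs2) h0
  | @and_neg_l β γ₂ B hβ IH =>
    intro _
    have h0 : Pr (∅ ∪ {β.neg}) ((β.and γ₂).neg) := by
      simpa using Proves.nandI0l β γ₂
    simpa using singlestep (fun hP hm hs1 hs2 => barL hβ hP hm hs1 hs2) h0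
  | @and_neg_r β γ₂ B hβ IH =>
    intro _
    have h0 : Pr (∅ ∪ {γ₂.neg}) ((β.and γ₂).neg) := by
      simpa using Proves.nandI0r β γ₂
    simpa using singlestep (fun hP hm hs1 hs2 => barL hβ hP hm hs1 hs2) h0
  | and_neg_both h => simp at h
  | @or_pos_l β γ₂ B hβ IH =>
    intro _
    have h0 : Pr (∅ ∪ {β}) (β.or γ₂) := by
      simpa using Proves.orI0l β γ₂
    simpa using singlestep (fun hP hm hs1 hs2 => barL hβ hP hm hs1 hs2) h0
  | @or_pos_r β γ₂ B hβ IH =>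
    intro _
    have h0 : Pr (∅ ∪ {γ₂}) (β.or γ₂) := by
      simpa using Proves.orI0r β γ₂
    simpa using singlestep (fun hP hm hs1 hs2 => barL hβ hP hm hs1 hs2) h0
  | or_pos_both h => simp at h
  | @or_neg β γ₂ B₁ B₂ hβ hγ IH₁ IH₂ =>
    intro _
    have h0 : Pr (∅ ∪ {β.neg, γ₂.neg}) ((β.or γ₂).neg) := by
      simpa using Proves.norI0 β γ₂
    simpa using pairstep (fun hP hm hs1 hs2 => barL hβ hP hm hs1 hs2)
      (fun hP hm hs1 hs2 => barL hγ hP hm hs1 hs2) h0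
  | @neg pos β B hβ IH =>
    cases pos with
    | true =>
      intro hne
      exact IH hne
    | false =>
      intro hne
      by_cases hB : B = {β}
      · subst hB; exact Proves.nnI0 β
      · exact Proves.nnI (IH (by simpa using hB))

end BarL
section Fwd
open Formula

inductive GRep : Formula → Finset Formula → Prop
  | and (β γ : Formula) : GRep (β.and γ) {β, γ}
  | orl (β γ : Formula) : GRep (β.or γ) {β}
  | orr (β γ : Formula) : GRep (β.or γ) {γ}
  | nandl (β γ : Formula) : GRep (β.and γ).neg {β.neg}
  | nandr (β γ : Formula) : GRep (β.and γ).neg {γ.neg}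
  | nor (β γ : Formula) : GRep (β.or γ).neg {β.neg, γ.neg}
  | nn (β : Formula) : GRep β.neg.neg {β}

lemma rep_small {g : Formula} {N : Finset Formula} (h : GRep g N) :
    ∀ n ∈ N, fsize n < fsize g := by
  cases h with
  | and β γ =>
    intro n hn; simp at hn
    have := fsize_pos β; have := fsize_pos γ
    rcases hn with rfl | rfl <;> simp [fsize] <;> omega
  | orl β γ =>
    intro n hn; simp at hn; subst hn
    have := fsize_pos γ; simp [fsize] <;> omega
  | orr β γ =>
    intro n hn; simp at hn; subst hn
    have := fsize_pos β; simp [fsize] <;> omega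
  | nandl β γ =>
    intro n hn; simp at hn; subst hn
    have := fsize_pos γ; simp [fsize] <;> omega
  | nandr β γ =>
    intro n hn; simp at hn; subst hn
    have := fsize_pos β; simp [fsize] <;> omega
  | nor β γ =>
    intro n hn; simp at hn
    have := fsize_pos β; have := fsize_pos γ
    rcases hn with rfl | rfl <;> simp [fsize] <;> omega
  | nn β =>
    intro n hn; simp at hn; subst hn
    simp [fsize] <;> omega

lemma rep_nonempty {g : Formula} {N : Finset Formula} (h : GRep g N) : N.Nonempty := by
  cases h <;> simp

lemma rep_not_mem {g : Formula} {N : Finset Formula} (h : GRep g N) : g ∉ N :=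
  fun hg => lt_irrefl _ (rep_small h g hg)

lemma rep_bar {g : Formula} {N : Finset Formula} (h : GRep g N) :
    ∀ {q : Bool} {φ : Formula}, sgn q φ = g → BarRel false q φ N := by
  cases h with
  | and β γ =>
    intro q φ hq; cases q <;> simp at hq
    subst hq
    simpa using BarRel.and_pos (BarRel.triv true β) (BarRel.triv true γ)
  | orl β γ =>
    intro q φ hq; cases q <;> simp at hq
    subst hq
    exact BarRel.or_pos_l (BarRel.triv true β)
  | orr β γ =>
    intro q φ hq; cases q <;> simp at hq
    subst hq
    exact BarRel.or_pos_r (BarRel.triv true γ)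
  | nandl β γ =>
    intro q φ hq
    cases q <;> simp at hq <;> subst hq
    · exact BarRel.and_neg_l (BarRel.triv false β)
    · exact BarRel.neg true (BarRel.and_neg_l (BarRel.triv false β))
  | nandr β γ =>
    intro q φ hq
    cases q <;> simp at hq <;> subst hq
    · exact BarRel.and_neg_r (BarRel.triv false γ)
    · exact BarRel.neg true (BarRel.and_neg_r (BarRel.triv false γ))
  | nor β γ =>
    intro q φ hq
    cases q <;> simp at hq <;> subst hq
    · simpa using BarRel.or_neg (BarRel.triv false β) (BarRel.triv false γ)
    · exact BarRel.neg true
        (by simpa using BarRel.or_neg (BarRel.triv false β) (BarRel.triv false γ))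
  | nn β =>
    intro q φ hq
    cases q <;> simp at hq <;> subst hq
    · exact BarRel.neg false (BarRel.triv true β)
    · exact BarRel.neg true (BarRel.neg false (BarRel.triv true β))

lemma bar_expand {g : Formula} {N : Finset Formula} (hrep : GRep g N) :
    ∀ {pos : Bool} {γ : Formula} {B : Finset Formula}, BarRel false pos γ B → g ∈ B →
      BarRel false pos γ (B.erase g ∪ N) := by
  intro pos γ B h
  induction h with
  | triv q φ =>
    intro hg; simp at hg; subst hg
    simpa using rep_bar hrep rfl
  | @and_pos β γ₂ B₁ B₂ h₁ h₂ IH₁ IH₂ =>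
    intro hg
    by_cases hg₁ : g ∈ B₁ <;> by_cases hg₂ : g ∈ B₂
    · have heq : (B₁ ∪ B₂).erase g ∪ N = (B₁.erase g ∪ N) ∪ (B₂.erase g ∪ N) := by
        ext x; simp [Finset.mem_erase]; tauto
      rw [heq]; exact BarRel.and_pos (IH₁ hg₁) (IH₂ hg₂)
    · have heq : (B₁ ∪ B₂).erase g ∪ N = (B₁.erase g ∪ N) ∪ B₂ := by
        ext x; simp [Finset.mem_erase]
        by_cases hx : x = g
        · subst hx; tauto
        · tauto
      rw [heq]; exact BarRel.and_pos (IH₁ hg₁) h₂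
    · have heq : (B₁ ∪ B₂).erase g ∪ N = B₁ ∪ (B₂.erase g ∪ N) := by
        ext x; simp [Finset.mem_erase]
        by_cases hx : x = g
        · subst hx; tauto
        · tauto
      rw [heq]; exact BarRel.and_pos h₁ (IH₂ hg₂)
    · simp at hg; tauto
  | @and_neg_l β γ₂ B h IH => intro hg; exact BarRel.and_neg_l (IH hg)
  | @and_neg_r β γ₂ B h IH => intro hg; exact BarRel.and_neg_r (IH hg)
  | and_neg_both h => simp at h
  | @or_pos_l β γ₂ B h IH => intro hg; exact BarRel.or_pos_l (IH hg)
  | @or_pos_r β γ₂ B h IH => intro hg; exact BarRel.or_pos_r (IH hg)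
  | or_pos_both h => simp at h
  | @or_neg β γ₂ B₁ B₂ h₁ h₂ IH₁ IH₂ =>
    intro hg
    by_cases hg₁ : g ∈ B₁ <;> by_cases hg₂ : g ∈ B₂
    · have heq : (B₁ ∪ B₂).erase g ∪ N = (B₁.erase g ∪ N) ∪ (B₂.erase g ∪ N) := by
        ext x; simp [Finset.mem_erase]; tauto
      rw [heq]; exact BarRel.or_neg (IH₁ hg₁) (IH₂ hg₂)
    · have heq : (B₁ ∪ B₂).erase g ∪ N = (B₁.erase g ∪ N) ∪ B₂ := by
        ext x; simp [Finset.mem_erase]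
        by_cases hx : x = g
        · subst hx; tauto
        · tauto
      rw [heq]; exact BarRel.or_neg (IH₁ hg₁) h₂
    · have heq : (B₁ ∪ B₂).erase g ∪ N = B₁ ∪ (B₂.erase g ∪ N) := by
        ext x; simp [Finset.mem_erase]
        by_cases hx : x = g
        · subst hx; tauto
        · tauto
      rw [heq]; exact BarRel.or_neg h₁ (IH₂ hg₂)
    · simp at hg; tauto
  | @neg pos β B h IH => intro hg; exact BarRel.neg pos (IH hg)

lemma bar_neg_inv {γ : Formula} {B : Finset Formula}
    (h : BarRel false true γ.neg B) : BarRel false false γ B := by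
  cases h with
  | triv => exact BarRel.triv false γ
  | neg _ h => exact h

lemma expand_gbar {δ g : Formula} {N B : Finset Formula}
    (hB : GroundingBar false δ B) (hrep : GRep g N) (hgB : g ∈ B) :
    GroundingBar false δ (B.erase g ∪ N) := by
  refine ⟨bar_expand hrep hB.1 hgB, ?_⟩
  intro hEq
  obtain ⟨n, hn⟩ := rep_nonempty hrep
  have hnδ : n = δ := by
    have : n ∈ ({δ} : Finset Formula) := hEq ▸ Finset.mem_union_right _ hn
    simpa using this
  have h1 : fsize n < fsize g := rep_small hrep n hn
  have h2 : fsize g ≤ fsize δ := by simpa using bar_size hB.1 g hgB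
  subst hnδ; omega
end Fwd
section UC

lemma uc_mono {S T : Set (Finset Formula)} (h : ∀ B ∈ S, B ∈ T) :
    ∀ {Γ}, UnionClosure S Γ → UnionClosure T Γ := by
  intro Γ hΓ
  induction hΓ with
  | base hB => exact .base (h _ hB)
  | union _ _ IH₁ IH₂ => exact .union IH₁ IH₂

lemma uc_union₂ {S T U : Set (Finset Formula)} (h : ∀ B ∈ S, ∀ C ∈ T, B ∪ C ∈ U) :
    ∀ {Γ Δ}, UnionClosure S Γ → UnionClosure T Δ → UnionClosure U (Γ ∪ Δ) := by
  intro Γ Δ hΓ hΔ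
  induction hΓ with
  | @base Γ₀ hB =>
    induction hΔ with
    | base hC => exact .base (h _ hB _ hC)
    | @union Δ₁ Δ₂ h1 h2 IH₁ IH₂ =>
      have heq : Γ₀ ∪ (Δ₁ ∪ Δ₂) = (Γ₀ ∪ Δ₁) ∪ (Γ₀ ∪ Δ₂) := by
        ext x; simp; tauto
      rw [heq]; exact .union IH₁ IH₂
  | @union Γ₁ Γ₂ h1 h2 IH₁ IH₂ =>
    have heq : (Γ₁ ∪ Γ₂) ∪ Δ = (Γ₁ ∪ Δ) ∪ (Γ₂ ∪ Δ) := by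
      ext x; simp; tauto
    rw [heq]; exact .union IH₁ IH₂

lemma uc_replace {S : Set (Finset Formula)} {g : Formula} {N : Finset Formula}
    (hS : ∀ B ∈ S, g ∈ B → B.erase g ∪ N ∈ S) :
    ∀ {Γ}, UnionClosure S Γ → g ∈ Γ → UnionClosure S (Γ.erase g ∪ N) := by
  intro Γ hΓ
  induction hΓ with
  | base hB => intro hg; exact .base (hS _ hB hg)
  | @union Γ₁ Γ₂ h1 h2 IH₁ IH₂ =>
    intro hg
    by_cases hg₁ : g ∈ Γ₁ <;> by_cases hg₂ : g ∈ Γ₂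
    · have heq : (Γ₁ ∪ Γ₂).erase g ∪ N = (Γ₁.erase g ∪ N) ∪ (Γ₂.erase g ∪ N) := by
        ext x; simp [Finset.mem_erase]; tauto
      rw [heq]; exact .union (IH₁ hg₁) (IH₂ hg₂)
    · have heq : (Γ₁ ∪ Γ₂).erase g ∪ N = (Γ₁.erase g ∪ N) ∪ Γ₂ := by
        ext x; simp [Finset.mem_erase]
        by_cases hx : x = g
        · subst hx; tauto
        · tauto
      rw [heq]; exact .union (IH₁ hg₁) h2
    · have heq : (Γ₁ ∪ Γ₂).erase g ∪ N = Γ₁ ∪ (Γ₂.erase g ∪ N) := by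
        ext x; simp [Finset.mem_erase]
        by_cases hx : x = g
        · subst hx; tauto
        · tauto
      rw [heq]; exact .union h1 (IH₂ hg₂)
    · simp at hg; tauto

lemma bars_fwd : ∀ {Γ : Finset Formula} {δ : Formula}, Proves false true Γ δ →
    UnionClosure {B : Finset Formula | GroundingBar false δ B} Γ := by
  intro Γ δ h
  induction h with
  | andI0 α β =>
    refine .base ⟨by simpa using BarRel.and_pos (BarRel.triv true α) (BarRel.triv true β),
      ne_singleton ?_⟩
    intro x hx; simp at hx
    have := fsize_pos α; have := fsize_pos β
    rcases hx with rfl | rfl <;> simp [fsize] <;> omega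
  | orI0l α β =>
    refine .base ⟨BarRel.or_pos_l (BarRel.triv true α), ne_singleton ?_⟩
    intro x hx; simp at hx; subst hx
    have := fsize_pos β; simp [fsize] <;> omega
  | orI0r α β =>
    refine .base ⟨BarRel.or_pos_r (BarRel.triv true β), ne_singleton ?_⟩
    intro x hx; simp at hx; subst hx
    have := fsize_pos α; simp [fsize] <;> omega
  | orI0both _ _ h => simp at h
  | nandI0l α β =>
    refine .base ⟨BarRel.neg true (BarRel.and_neg_l (BarRel.triv false α)), ne_singleton ?_⟩
    intro x hx; simp at hx; subst hx
    have := fsize_pos β; simp [fsize] <;> omega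
  | nandI0r α β =>
    refine .base ⟨BarRel.neg true (BarRel.and_neg_r (BarRel.triv false β)), ne_singleton ?_⟩
    intro x hx; simp at hx; subst hx
    have := fsize_pos α; simp [fsize] <;> omega
  | nandI0both _ _ h => simp at h
  | norI0 α β =>
    refine .base ⟨BarRel.neg true
      (by simpa using BarRel.or_neg (BarRel.triv false α) (BarRel.triv false β)),
      ne_singleton ?_⟩
    intro x hx; simp at hx
    have := fsize_pos α; have := fsize_pos β
    rcases hx with rfl | rfl <;> simp [fsize] <;> omega
  | nnI0 α =>
    refine .base ⟨BarRel.neg true (BarRel.neg false (BarRel.triv true α)), ne_singleton ?_⟩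
    intro x hx; simp at hx; subst hx
    simp [fsize] <;> omega
  | @andI Γ Δ α β _ _ IH₁ IH₂ =>
    refine uc_union₂ ?_ IH₁ IH₂
    intro B hB C hC
    refine ⟨hB.1.and_pos hC.1, ne_singleton ?_⟩
    intro x hx; simp at hx
    have := fsize_pos α; have := fsize_pos β
    rcases hx with hx | hx
    · have := bar_size hB.1 x hx; simp [fsize, Bool.cond_true, Bool.cond_false] at this ⊢; omega
    · have := bar_size hC.1 x hx; simp [fsize, Bool.cond_true, Bool.cond_false] at this ⊢; omega
  | @orIl Γ α β _ IH =>
    refine uc_mono ?_ IH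
    intro B hB
    refine ⟨hB.1.or_pos_l, ne_singleton ?_⟩
    intro x hx
    have h1 := bar_size hB.1 x hx
    have := fsize_pos β; simp at h1; simp [fsize, Bool.cond_true, Bool.cond_false] at this ⊢; omega
  | @orIr Γ α β _ IH =>
    refine uc_mono ?_ IH
    intro B hB
    refine ⟨hB.1.or_pos_r, ne_singleton ?_⟩
    intro x hx
    have h1 := bar_size hB.1 x hx
    have := fsize_pos α; simp at h1; simp [fsize, Bool.cond_true, Bool.cond_false] at this ⊢; omega
  | orIboth h => simp at h
  | @nandIl Γ α β _ IH =>
    refine uc_mono ?_ IH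
    intro B hB
    have hinv := bar_neg_inv hB.1
    refine ⟨BarRel.neg true hinv.and_neg_l, ne_singleton ?_⟩
    intro x hx
    have h1 := bar_size hinv x hx
    have := fsize_pos β; simp at h1; simp [fsize, Bool.cond_true, Bool.cond_false] at this ⊢; omega
  | @nandIr Γ α β _ IH =>
    refine uc_mono ?_ IH
    intro B hB
    have hinv := bar_neg_inv hB.1
    refine ⟨BarRel.neg true hinv.and_neg_r, ne_singleton ?_⟩
    intro x hx
    have h1 := bar_size hinv x hx
    have := fsize_pos α; simp at h1; simp [fsize, Bool.cond_true, Bool.cond_false] at this ⊢; omega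
  | nandIboth h => simp at h
  | @norI Γ Δ α β _ _ IH₁ IH₂ =>
    refine uc_union₂ ?_ IH₁ IH₂
    intro B hB C hC
    have hinvB := bar_neg_inv hB.1
    have hinvC := bar_neg_inv hC.1
    refine ⟨BarRel.neg true (hinvB.or_neg hinvC), ne_singleton ?_⟩
    intro x hx; simp at hx
    have := fsize_pos α; have := fsize_pos β
    rcases hx with hx | hx
    · have := bar_size hinvB x hx; simp [fsize, Bool.cond_true, Bool.cond_false] at this ⊢; omega
    · have := bar_size hinvC x hx; simp [fsize, Bool.cond_true, Bool.cond_false] at this ⊢; omega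
  | @nnI Γ α _ IH =>
    refine uc_mono ?_ IH
    intro B hB
    refine ⟨BarRel.neg true (BarRel.neg false hB.1), ne_singleton ?_⟩
    intro x hx
    have := bar_size hB.1 x hx
    simp [fsize, Bool.cond_true, Bool.cond_false] at this ⊢; omega
  | @andE Γ β γ δ hmem _ IH =>
    exact uc_replace (fun B hB hgB => expand_gbar hB (GRep.and β γ) hgB) IH hmem
  | @orEl Γ β γ δ hmem _ IH =>
    exact uc_replace (fun B hB hgB => expand_gbar hB (GRep.orl β γ) hgB) IH hmem
  | @orEr Γ β γ δ hmem _ IH =>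
    exact uc_replace (fun B hB hgB => expand_gbar hB (GRep.orr β γ) hgB) IH hmem
  | orEboth h => simp at h
  | @nandEl Γ β γ δ hmem _ IH =>
    exact uc_replace (fun B hB hgB => expand_gbar hB (GRep.nandl β γ) hgB) IH hmem
  | @nandEr Γ β γ δ hmem _ IH =>
    exact uc_replace (fun B hB hgB => expand_gbar hB (GRep.nandr β γ) hgB) IH hmem
  | nandEboth h => simp at h
  | @norE Γ β γ δ hmem _ IH =>
    exact uc_replace (fun B hB hgB => expand_gbar hB (GRep.nor β γ) hgB) IH hmem
  | @nnE Γ β δ hmem _ IH =>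
    exact uc_replace (fun B hB hgB => expand_gbar hB (GRep.nn β) hgB) IH hmem
  | am _ _ _ IH₁ IH₂ => exact .union IH₁ IH₂

end UC
/-- Amalgamation closure: the provable grounds of `α` in the full calculus
`G` are closed under union, and coincide with the closure under binary union
of the grounding bars for `α`. -/
theorem amalgamation_closure (α : Formula) :
    (∀ Γ Δ : Finset Formula, Proves false true Γ α → Proves false true Δ α →
      Proves false true (Γ ∪ Δ) α) ∧
    (∀ Γ : Finset Formula, Proves false true Γ α ↔
      UnionClosure {B : Finset Formula | GroundingBar false α B} Γ) := by
  refine ⟨fun Γ Δ h1 h2 => Proves.am rfl h1 h2, fun Γ => ⟨fun h => bars_fwd h, fun h => ?_⟩⟩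
  induction h with
  | base hB => exact barM hB.1 hB.2
  | union _ _ IH₁ IH₂ => exact Proves.am rfl IH₁ IH₂
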